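/- Let A ∈ ℝ^{m×n}, let U ∈ ℝ^{m×r} have orthonormal columns (UᵀU = I_r), let V ∈ ℝ^{r×n} and Q ∈ ℝ^{s×n} have orthonormal rows (VVᵀ = I_r, QQᵀ = I_s) with mutually orthogonal row spans (VQᵀ = 0), and let S ∈ ℝ^{r×r}, E ∈ ℝ^{m×n} with A = U S V + E and UᵀE = 0. Let B ∈ ℝ^{p×n} be given by B = P V + L Q for some P ∈ ℝ^{p×r}, L ∈ ℝ^{p×s}. Let S′ be the (r+p)×(r+s) block matrix [[S, 0], [P, L]], and suppose S′ = U′ S̃ V′ + E′ for some matrices U′ ∈ ℝ^{(r+p)×r̃}, S̃ ∈ ℝ^{r̃×r̃}, V′ ∈ ℝ^{r̃×(r+s)}, E′ ∈ ℝ^{(r+p)×(r+s)}. Define Ũ = blkdiag(U, I_p)·U′ ∈ ℝ^{(m+p)×r̃} and Ṽ = V′·[V; Q] ∈ ℝ^{r̃×n}, and let Ã = [A; B] ∈ ℝ^{(m+p)×n} be the vertical concatenation of A and B. Then ‖Ã − Ũ S̃ Ṽ‖_F² = ‖E‖_F² + ‖E′‖_F², where ‖·‖_F denotes the Frobenius norm.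 -/

import Mathlib

open Matrix BigOperators

/-- Squared Frobenius norm of a real matrix. -/
noncomputable def frobSq {m n : Type*} [Fintype m] [Fintype n] (M : Matrix m n ℝ) : ℝ :=
  ∑ i, ∑ j, (M i j) ^ 2

lemma frobSq_eq_trace {m n : Type*} [Fintype m] [Fintype n] (M : Matrix m n ℝ) :
    frobSq M = Matrix.trace (M * Mᵀ) := by
  simp [frobSq, Matrix.trace, Matrix.mul_apply, Matrix.diag, sq]

/-- Incremental SVD error decomposition (appendix of the paper). -/
theorem incremental_svd_error_decomposition
    {m n r s p rt : ℕ}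
    (A E : Matrix (Fin m) (Fin n) ℝ)
    (U : Matrix (Fin m) (Fin r) ℝ)
    (V : Matrix (Fin r) (Fin n) ℝ)
    (Q : Matrix (Fin s) (Fin n) ℝ)
    (S : Matrix (Fin r) (Fin r) ℝ)
    (B : Matrix (Fin p) (Fin n) ℝ)
    (P : Matrix (Fin p) (Fin r) ℝ)
    (L : Matrix (Fin p) (Fin s) ℝ)
    (U' : Matrix (Fin r ⊕ Fin p) (Fin rt) ℝ)
    (St : Matrix (Fin rt) (Fin rt) ℝ)
    (V' : Matrix (Fin rt) (Fin r ⊕ Fin s) ℝ)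
    (E' : Matrix (Fin r ⊕ Fin p) (Fin r ⊕ Fin s) ℝ)
    (hU : Uᵀ * U = 1)
    (hV : V * Vᵀ = 1)
    (hQ : Q * Qᵀ = 1)
    (hVQ : V * Qᵀ = 0)
    (hA : A = U * S * V + E)
    (hUE : Uᵀ * E = 0)
    (hB : B = P * V + L * Q)
    (hS' : Matrix.fromBlocks S 0 P L = U' * St * V' + E') :
    frobSq (Matrix.fromRows A B -
        Matrix.fromBlocks U 0 0 (1 : Matrix (Fin p) (Fin p) ℝ) * U' * St *
          (V' * Matrix.fromRows V Q)) =
      frobSq E + frobSq E' := by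
  set Ub : Matrix (Fin m ⊕ Fin p) (Fin r ⊕ Fin p) ℝ :=
    Matrix.fromBlocks U 0 0 (1 : Matrix (Fin p) (Fin p) ℝ) with hUb_def
  set W : Matrix (Fin r ⊕ Fin s) (Fin n) ℝ := Matrix.fromRows V Q with hW_def
  have hQV : Q * Vᵀ = 0 := by
    have := congrArg Matrix.transpose hVQ
    simpa [Matrix.transpose_mul] using this
  have hUbo : Ubᵀ * Ub = 1 := by
    simp [hUb_def, Matrix.fromBlocks_transpose, Matrix.fromBlocks_multiply, hU,
      Matrix.fromBlocks_one]
  have hWo : W * Wᵀ = 1 := by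
    rw [hW_def, Matrix.transpose_fromRows, Matrix.fromRows_mul_fromCols, hV, hQ, hVQ, hQV,
      Matrix.fromBlocks_one]
  have hUSt : U' * St * V' = Matrix.fromBlocks S 0 P L - E' := by
    rw [hS']; abel
  have key : Matrix.fromRows A B - Ub * U' * St * (V' * W) =
      Matrix.fromRows E 0 + Ub * E' * W := by
    have h1 : Ub * U' * St * (V' * W) = Ub * (U' * St * V') * W := by
      simp [Matrix.mul_assoc]
    rw [h1, hUSt]
    have h2 : Ub * Matrix.fromBlocks S 0 P L * W = Matrix.fromRows (A - E) B := by
      rw [hUb_def, Matrix.fromBlocks_multiply, hW_def, Matrix.fromBlocks_mul_fromRows,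
        hA, hB]
      simp [Matrix.mul_assoc]
    have h3 : Matrix.fromRows A B - Matrix.fromRows (A - E) B = Matrix.fromRows E 0 := by
      ext (i | i) j <;> simp [Matrix.fromRows_apply_inl, Matrix.fromRows_apply_inr]
    rw [Matrix.mul_sub, Matrix.sub_mul, h2, ← h3]
    abel
  rw [key]
  set X := Matrix.fromRows E (0 : Matrix (Fin p) (Fin n) ℝ) with hX
  set Y := Ub * E' * W with hY
  have cross : Ubᵀ * X = 0 := by
    rw [hUb_def, hX, Matrix.fromBlocks_transpose, Matrix.fromBlocks_mul_fromRows, hUE]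
    simp
  have tXY : Matrix.trace (X * Yᵀ) = 0 := by
    rw [hY]
    have : X * (Ub * E' * W)ᵀ = X * (Wᵀ * E'ᵀ * Ubᵀ) := by
      simp [Matrix.transpose_mul, Matrix.mul_assoc]
    rw [this]
    have : X * (Wᵀ * E'ᵀ * Ubᵀ) = (X * (Wᵀ * E'ᵀ)) * Ubᵀ := by
      simp [Matrix.mul_assoc]
    rw [this, Matrix.trace_mul_comm, ← Matrix.mul_assoc, cross]
    simp
  have tYX : Matrix.trace (Y * Xᵀ) = 0 := by
    have : Y * Xᵀ = (X * Yᵀ)ᵀ := by simp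
    rw [this, Matrix.trace_transpose, tXY]
  have tXX : Matrix.trace (X * Xᵀ) = frobSq E := by
    rw [hX, Matrix.transpose_fromRows, Matrix.fromRows_mul_fromCols]
    simp [Matrix.trace, Matrix.diag, Fintype.sum_sum_type, frobSq_eq_trace]
  have tYY : Matrix.trace (Y * Yᵀ) = frobSq E' := by
    rw [hY]
    have : Ub * E' * W * (Ub * E' * W)ᵀ = Ub * (E' * (W * Wᵀ) * E'ᵀ) * Ubᵀ := by
      simp [Matrix.transpose_mul, Matrix.mul_assoc]
    rw [this, hWo, Matrix.mul_one, Matrix.trace_mul_comm, ← Matrix.mul_assoc, hUbo]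
    simp [frobSq_eq_trace]
  rw [frobSq_eq_trace]
  have expand : (X + Y) * (X + Y)ᵀ = X * Xᵀ + X * Yᵀ + Y * Xᵀ + Y * Yᵀ := by
    rw [Matrix.transpose_add, Matrix.add_mul, Matrix.mul_add, Matrix.mul_add]
    abel
  rw [expand]
  simp [Matrix.trace_add, tXX, tXY, tYX, tYY]
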